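/- Let z₀ ∈ ℂ, r > 0, and let (gₙ) be a sequence of functions holomorphic (pole-free) on the disk D_{r/2}(z₀) = {z : |z − z₀| < r/2} and meromorphic on D_r(z₀). If (gₙ) converges locally uniformly, with respect to the spherical metric, on the punctured disk D_r(z₀) \ {z₀} to a meromorphic function h with h ≢ ∞, then gₙ converges locally uniformly (in particular, uniformly on compact subsets) on the full disk D_{r/2}(z₀); consequently the family {gₙ} is normal at z₀. -/

import Mathlib

open OnePoint Metric Filter Complex Set

noncomputable section

/-- The finite part of a point of the Riemann sphere `ℂ ∪ {∞}` (junk value `0` at `∞`). -/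
def sphToC (p : OnePoint ℂ) : ℂ := Option.elim p 0 id

open Classical in
/-- Inversion `w ↦ 1/w` on the Riemann sphere `ℂ ∪ {∞}`. -/
def sphInv (p : OnePoint ℂ) : OnePoint ℂ :=
  if p = ∞ then ((0 : ℂ) : OnePoint ℂ)
  else if sphToC p = 0 then ∞ else (((sphToC p)⁻¹ : ℂ) : OnePoint ℂ)

open Classical in
/-- The spherical (chordal) metric on the Riemann sphere `ℂ ∪ {∞}`. -/
def sphDist (p q : OnePoint ℂ) : ℝ :=
  if p = ∞ then
    (if q = ∞ then 0 else 2 / Real.sqrt (1 + ‖sphToC q‖ ^ 2))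
  else if q = ∞ then 2 / Real.sqrt (1 + ‖sphToC p‖ ^ 2)
  else 2 * ‖sphToC p - sphToC q‖ /
    (Real.sqrt (1 + ‖sphToC p‖ ^ 2) * Real.sqrt (1 + ‖sphToC q‖ ^ 2))

/-- `f : ℂ → ℂ ∪ {∞}` is meromorphic at `z`: near `z` it agrees with an analytic function,
or with the spherical inverse of an analytic function (covering poles and `≡ ∞`). -/
def SphMeromorphicAt (f : ℂ → OnePoint ℂ) (z : ℂ) : Prop :=
  (∃ g : ℂ → ℂ, AnalyticAt ℂ g z ∧ ∀ᶠ w in nhds z, f w = ((g w : ℂ) : OnePoint ℂ)) ∨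
  (∃ g : ℂ → ℂ, AnalyticAt ℂ g z ∧ ∀ᶠ w in nhds z, f w = sphInv ((g w : ℂ) : OnePoint ℂ))

/-- `f` is meromorphic (as a map to the Riemann sphere) on a set `Ω ⊆ ℂ`. -/
def SphMeromorphicOn (f : ℂ → OnePoint ℂ) (Ω : Set ℂ) : Prop :=
  ∀ z ∈ Ω, SphMeromorphicAt f z

/-- Locally uniform (= uniform on compact subsets, for open `Ω`) convergence of a sequence of
sphere-valued functions on `Ω`, with respect to the spherical metric. -/
def SphLocUnifOn (F : ℕ → ℂ → OnePoint ℂ) (g : ℂ → OnePoint ℂ) (Ω : Set ℂ) : Prop :=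
  ∀ K : Set ℂ, K ⊆ Ω → IsCompact K → ∀ ε : ℝ, 0 < ε →
    ∃ N : ℕ, ∀ n ≥ N, ∀ z ∈ K, sphDist (F n z) (g z) < ε

/-- A family `𝓕` of sphere-valued functions is normal on `Ω`: every sequence in `𝓕` has a
subsequence converging locally uniformly on `Ω` (spherical metric) to a meromorphic function
or to the constant `∞`. -/
def SphNormalOn (𝓕 : Set (ℂ → OnePoint ℂ)) (Ω : Set ℂ) : Prop :=
  ∀ F : ℕ → ℂ → OnePoint ℂ, (∀ n, F n ∈ 𝓕) →
    ∃ φ : ℕ → ℕ, StrictMono φ ∧ ∃ g : ℂ → OnePoint ℂ,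
      (SphMeromorphicOn g Ω ∨ ∀ z ∈ Ω, g z = ∞) ∧
      SphLocUnifOn (fun n => F (φ n)) g Ω

/-- A family is normal at a point if it is normal on some open neighbourhood of the point. -/
def SphNormalAt (𝓕 : Set (ℂ → OnePoint ℂ)) (z₀ : ℂ) : Prop :=
  ∃ U : Set ℂ, IsOpen U ∧ z₀ ∈ U ∧ SphNormalOn 𝓕 U

open Classical in
/-- The derivative of a sphere-valued meromorphic function: `∞` at poles (and where `f = ∞`),
and the usual derivative of the finite part elsewhere. -/
def sphDeriv (f : ℂ → OnePoint ℂ) : ℂ → OnePoint ℂ :=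
  fun z => if f z = ∞ then ∞ else ((deriv (fun w => sphToC (f w)) z : ℂ) : OnePoint ℂ)

/-- All zeros of `f` on `Ω` have multiplicity at least `m`: at every zero, the first `m`
derivatives (orders `0, …, m-1`) of the finite part of `f` vanish. -/
def SphZerosMultAtLeast (f : ℂ → OnePoint ℂ) (Ω : Set ℂ) (m : ℕ) : Prop :=
  ∀ z ∈ Ω, f z = ((0 : ℂ) : OnePoint ℂ) →
    ∀ j < m, iteratedDeriv j (fun w => sphToC (f w)) z = 0

/-! ### Auxiliary lemmas -/

lemma sphToC_coe (a : ℂ) : sphToC ((a : ℂ) : OnePoint ℂ) = a := rfl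

lemma coe_sphToC {p : OnePoint ℂ} (hp : p ≠ ∞) : ((sphToC p : ℂ) : OnePoint ℂ) = p := by
  cases p with
  | infty => exact absurd rfl hp
  | coe a => rfl

lemma sphInv_coe (a : ℂ) :
    sphInv ((a : ℂ) : OnePoint ℂ) = if a = 0 then ∞ else ((a⁻¹ : ℂ) : OnePoint ℂ) := by
  rw [sphInv, if_neg (OnePoint.coe_ne_infty a), sphToC_coe]

lemma sphDist_coe_coe (a b : ℂ) :
    sphDist (a : OnePoint ℂ) (b : OnePoint ℂ) =
      2 * ‖a - b‖ /
        (Real.sqrt (1 + ‖a‖ ^ 2) * Real.sqrt (1 + ‖b‖ ^ 2)) := by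
  rw [sphDist, if_neg (OnePoint.coe_ne_infty a), if_neg (OnePoint.coe_ne_infty b), sphToC_coe,
    sphToC_coe]

lemma sphDist_self (p : OnePoint ℂ) : sphDist p p = 0 := by
  cases p with
  | infty => simp [sphDist]
  | coe a => rw [sphDist_coe_coe]; simp

lemma sphDist_le (a b : ℂ) :
    sphDist (a : OnePoint ℂ) (b : OnePoint ℂ) ≤ 2 * ‖a - b‖ := by
  rw [sphDist_coe_coe]
  have h1 : 1 ≤ Real.sqrt (1 + ‖a‖ ^ 2) :=
    Real.one_le_sqrt.2 (le_add_of_nonneg_right (by positivity))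
  have h2 : 1 ≤ Real.sqrt (1 + ‖b‖ ^ 2) :=
    Real.one_le_sqrt.2 (le_add_of_nonneg_right (by positivity))
  exact div_le_self (by positivity) (one_le_mul_of_one_le_of_one_le h1 h2)

lemma abs_sub_le_sphDist {a b : ℂ} {B : ℝ} (ha : ‖a‖ ≤ B) (hb : ‖b‖ ≤ B) :
    ‖a - b‖ ≤ (1 + B ^ 2) * sphDist (a : OnePoint ℂ) (b : OnePoint ℂ) / 2 := by
  have hB : 0 ≤ B := le_trans (norm_nonneg a) ha
  set sa := Real.sqrt (1 + ‖a‖ ^ 2) with hsa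
  set sb := Real.sqrt (1 + ‖b‖ ^ 2) with hsb
  have hsa0 : 0 < sa := Real.sqrt_pos.2 (by positivity)
  have hsb0 : 0 < sb := Real.sqrt_pos.2 (by positivity)
  have hsaB : sa ≤ Real.sqrt (1 + B ^ 2) :=
    Real.sqrt_le_sqrt (by nlinarith [mul_le_mul ha ha (norm_nonneg a) hB])
  have hsbB : sb ≤ Real.sqrt (1 + B ^ 2) :=
    Real.sqrt_le_sqrt (by nlinarith [mul_le_mul hb hb (norm_nonneg b) hB])
  have hsq : Real.sqrt (1 + B ^ 2) * Real.sqrt (1 + B ^ 2) = 1 + B ^ 2 :=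
    Real.mul_self_sqrt (by positivity)
  have hD : sa * sb ≤ 1 + B ^ 2 := by nlinarith [Real.sqrt_nonneg (1 + B ^ 2)]
  have hs0 : 0 ≤ sphDist (a : OnePoint ℂ) (b : OnePoint ℂ) := by
    rw [sphDist_coe_coe]; positivity
  have key : sphDist (a : OnePoint ℂ) (b : OnePoint ℂ) * (sa * sb) = 2 * ‖a - b‖ := by
    rw [sphDist_coe_coe, ← hsa, ← hsb, div_mul_cancel₀]
    positivity
  nlinarith [mul_le_mul_of_nonneg_left hD hs0]

lemma le_sphDist_of_big {a b : ℂ} {M : ℝ} (hb : ‖b‖ ≤ M)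
    (ha : 2 * M + 2 ≤ ‖a‖) :
    1 / (Real.sqrt 2 * Real.sqrt (1 + M ^ 2)) ≤ sphDist (a : OnePoint ℂ) (b : OnePoint ℂ) := by
  have hM : 0 ≤ M := le_trans (norm_nonneg b) hb
  have hA2 : 2 ≤ ‖a‖ := by linarith
  have hab : ‖a‖ - M ≤ ‖a - b‖ := by
    have := norm_sub_norm_le a b
    linarith
  set sa := Real.sqrt (1 + ‖a‖ ^ 2) with hsa
  set sb := Real.sqrt (1 + ‖b‖ ^ 2) with hsb
  have hsa0 : 0 < sa := Real.sqrt_pos.2 (by positivity)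
  have hsb0 : 0 < sb := Real.sqrt_pos.2 (by positivity)
  have hsM0 : 0 < Real.sqrt (1 + M ^ 2) := Real.sqrt_pos.2 (by positivity)
  have hs20 : 0 < Real.sqrt 2 := by positivity
  have hsaA : sa ≤ Real.sqrt 2 * ‖a‖ := by
    rw [hsa]
    calc Real.sqrt (1 + ‖a‖ ^ 2) ≤ Real.sqrt (2 * ‖a‖ ^ 2) :=
          Real.sqrt_le_sqrt (by nlinarith)
      _ = Real.sqrt 2 * ‖a‖ := by
          rw [Real.sqrt_mul (by norm_num), Real.sqrt_sq (norm_nonneg a)]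
  have hsbM : sb ≤ Real.sqrt (1 + M ^ 2) :=
    Real.sqrt_le_sqrt (by nlinarith [mul_le_mul hb hb (norm_nonneg b) hM])
  rw [sphDist_coe_coe, ← hsa, ← hsb, div_le_div_iff₀ (by positivity) (by positivity)]
  have h1 : sa * sb ≤ (Real.sqrt 2 * ‖a‖) * Real.sqrt (1 + M ^ 2) :=
    mul_le_mul hsaA hsbM (le_of_lt hsb0) (by positivity)
  have h2 : ‖a‖ ≤ 2 * ‖a - b‖ := by linarith
  nlinarith [mul_le_mul_of_nonneg_right h2 (le_of_lt (mul_pos hs20 hsM0))]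

/-- The finite part of a sphere-valued function is analytic wherever the function is
meromorphic and eventually avoids `∞`. -/
lemma analyticAt_sphToC {f : ℂ → OnePoint ℂ} {z : ℂ}
    (hm : SphMeromorphicAt f z) (hf : ∀ᶠ w in nhds z, f w ≠ ∞) :
    AnalyticAt ℂ (fun w => sphToC (f w)) z := by
  rcases hm with ⟨G, hG, hEq⟩ | ⟨G, hG, hEq⟩
  · refine hG.congr ?_
    filter_upwards [hEq] with w hw
    rw [hw, sphToC_coe]
  · have hGne : ∀ᶠ w in nhds z, G w ≠ 0 := by
      filter_upwards [hEq, hf] with w h1 h2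
      intro h0
      rw [h1, sphInv_coe, if_pos h0] at h2
      exact h2 rfl
    have hinv : AnalyticAt ℂ (fun w => (G w)⁻¹) z := hG.inv hGne.self_of_nhds
    refine hinv.congr ?_
    filter_upwards [hEq, hGne] with w h1 h2
    rw [h1, sphInv_coe, if_neg h2, sphToC_coe]

/-- If a meromorphic function is not `∞` at a point it is eventually not `∞`. -/
lemma eventually_ne_infty_of_ne {f : ℂ → OnePoint ℂ} {z : ℂ}
    (hm : SphMeromorphicAt f z) (hz : f z ≠ ∞) :
    ∀ᶠ w in nhds z, f w ≠ ∞ := by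
  rcases hm with ⟨G, hG, hEq⟩ | ⟨G, hG, hEq⟩
  · filter_upwards [hEq] with w hw
    rw [hw]; exact OnePoint.coe_ne_infty _
  · have hGz : G z ≠ 0 := by
      intro h0
      apply hz
      rw [hEq.self_of_nhds, sphInv_coe, if_pos h0]
    have : ∀ᶠ w in nhds z, G w ≠ 0 :=
      hG.continuousAt.eventually_ne hGz
    filter_upwards [hEq, this] with w h1 h2
    rw [h1, sphInv_coe, if_neg h2]
    exact OnePoint.coe_ne_infty _

/-- Dichotomy: near any point of meromorphy, either `f ≡ ∞` or `f ≠ ∞` on a punctured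
neighbourhood. -/
lemma merom_dichotomy {f : ℂ → OnePoint ℂ} {z : ℂ} (hm : SphMeromorphicAt f z) :
    (∀ᶠ w in nhds z, f w = ∞) ∨ (∀ᶠ w in nhdsWithin z {z}ᶜ, f w ≠ ∞) := by
  rcases hm with ⟨G, hG, hEq⟩ | ⟨G, hG, hEq⟩
  · right
    filter_upwards [nhdsWithin_le_nhds hEq] with w hw
    rw [hw]; exact OnePoint.coe_ne_infty _
  · rcases hG.eventually_eq_zero_or_eventually_ne_zero with h0 | h0
    · left
      filter_upwards [hEq, h0] with w h1 h2
      rw [h1, sphInv_coe, if_pos h2]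
    · right
      filter_upwards [nhdsWithin_le_nhds hEq, h0] with w h1 h2
      rw [h1, sphInv_coe, if_neg h2]
      exact OnePoint.coe_ne_infty _

/-- The punctured disc is preconnected. -/
lemma isPreconnected_punctured_ball (z₀ : ℂ) {r : ℝ} (hr : 0 < r) :
    IsPreconnected (ball z₀ r \ {z₀}) := by
  have hrank : 1 < Module.rank ℝ ℂ := by
    rw [Complex.rank_real_complex]; norm_num
  -- the ambient sphere of radius r/2 and the rays
  set S : Set ℂ := sphere z₀ (r / 2) with hS
  have hSpre : IsPreconnected S := isPreconnected_sphere hrank z₀ (r / 2)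
  have hSsub : S ⊆ ball z₀ r \ {z₀} := by
    intro z hz
    rw [mem_sphere] at hz
    constructor
    · rw [mem_ball, hz]; linarith
    · simp only [mem_singleton_iff]
      intro h; rw [h] at hz; rw [dist_self] at hz; linarith
  set A : ℂ → Set ℂ := fun u => ((fun t : ℝ => z₀ + t • u) '' Ioo 0 r) ∪ S with hA
  have hApre : ∀ u ∈ sphere (0 : ℂ) 1, IsPreconnected (A u) := by
    intro u hu
    rw [mem_sphere, dist_zero_right] at hu
    have hray : IsPreconnected ((fun t : ℝ => z₀ + t • u) '' Ioo 0 r) :=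
      isPreconnected_Ioo.image _ (by fun_prop)
    apply IsPreconnected.union (z₀ + (r / 2) • u)
    · exact ⟨r / 2, ⟨by linarith, by linarith⟩, rfl⟩
    · rw [hS, mem_sphere]
      simp [dist_eq_norm, norm_smul, hu, abs_of_pos hr]
    · exact hray
    · exact hSpre
  have hAsub : ∀ u ∈ sphere (0 : ℂ) 1, A u ⊆ ball z₀ r \ {z₀} := by
    intro u hu
    rw [mem_sphere, dist_zero_right] at hu
    rintro z (⟨t, ht, rfl⟩ | hz)
    · constructor
      · rw [mem_ball, dist_eq_norm]
        simp only [add_sub_cancel_left]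
        rw [norm_smul, hu, mul_one, Real.norm_eq_abs, abs_of_pos ht.1]
        exact ht.2
      · simp only [mem_singleton_iff, add_eq_left]
        intro h
        rw [smul_eq_zero] at h
        rcases h with h | h
        · exact absurd h (ne_of_gt ht.1)
        · rw [h, norm_zero] at hu; norm_num at hu
    · exact hSsub hz
  have hcover : ball z₀ r \ {z₀} = ⋃₀ (A '' sphere (0 : ℂ) 1) := by
    apply Subset.antisymm
    · intro z hz
      obtain ⟨hzb, hzne⟩ := hz
      simp only [mem_singleton_iff] at hzne
      have hd : 0 < ‖z - z₀‖ := by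
        rw [norm_pos_iff]
        exact sub_ne_zero.2 hzne
      set u : ℂ := (‖z - z₀‖ : ℝ)⁻¹ • (z - z₀) with hu
      have hunorm : u ∈ sphere (0 : ℂ) 1 := by
        rw [mem_sphere, dist_zero_right, hu, norm_smul, Real.norm_eq_abs,
          abs_of_pos (by positivity)]
        field_simp
      refine ⟨A u, ⟨u, hunorm, rfl⟩, Or.inl ⟨‖z - z₀‖, ?_, ?_⟩⟩
      · constructor
        · exact hd
        · rw [mem_ball, dist_eq_norm] at hzb; exact hzb
      · show z₀ + ‖z - z₀‖ • u = z
        rw [hu, smul_smul, mul_inv_cancel₀ (ne_of_gt hd), one_smul]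
        ring
    · intro z hz
      obtain ⟨s, ⟨u, hu, rfl⟩, hzs⟩ := hz
      exact hAsub u hu hzs
  rw [hcover]
  apply isPreconnected_sUnion (z₀ + (r / 2) • (1 : ℂ))
  · rintro s ⟨u, hu, rfl⟩
    apply Or.inr
    rw [hS, mem_sphere]
    simp [dist_eq_norm, norm_smul, abs_of_pos hr]
  · rintro s ⟨u, hu, rfl⟩
    exact hApre u hu

/-- On a preconnected set where a meromorphic function is somewhere finite, the function is
finite on a punctured neighbourhood of every point. -/
lemma eventually_ne_infty_punctured {h : ℂ → OnePoint ℂ} {Ω : Set ℂ}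
    (hΩc : IsPreconnected Ω) (hm : SphMeromorphicOn h Ω)
    (hne : ∃ w ∈ Ω, h w ≠ ∞) :
    ∀ z ∈ Ω, ∀ᶠ w in nhdsWithin z {z}ᶜ, h w ≠ ∞ := by
  set U : Set ℂ := {z | ∀ᶠ w in nhds z, h w = ∞} with hUdef
  have hUo : IsOpen U := isOpen_setOf_eventually_nhds
  have hcov : Ω ⊆ U ∪ interior Uᶜ := by
    intro z hz
    rcases merom_dichotomy (hm z hz) with hl | hr
    · exact Or.inl hl
    · right
      rw [mem_interior]
      rw [eventually_nhdsWithin_iff] at hr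
      obtain ⟨W, hWsub, hWo, hzW⟩ := _root_.eventually_nhds_iff.1 hr
      refine ⟨W, ?_, hWo, hzW⟩
      intro u hu
      simp only [mem_compl_iff]
      intro huU
      have h1 : ∀ᶠ w in nhds u, h w = ∞ := huU
      have h2 : ∀ᶠ w in nhds u, w ∈ W := hWo.eventually_mem hu
      by_cases huz : u = z
      · subst huz
        have h3 : ∀ᶠ w in nhdsWithin u {u}ᶜ, h w = ∞ ∧ w ∈ W :=
          nhdsWithin_le_nhds (h1.and h2)
        have h4 : ∀ᶠ w in nhdsWithin u {u}ᶜ, w ∈ ({u} : Set ℂ)ᶜ :=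
          eventually_mem_nhdsWithin
        obtain ⟨w, ⟨hwi, hwW⟩, hwne⟩ := (h3.and h4).exists
        exact hWsub w hwW hwne hwi
      · have h5 : ∀ᶠ w in nhds u, w ≠ z := eventually_ne_nhds huz
        obtain ⟨w, hwi, hwW, hwne⟩ := (h1.and (h2.and h5)).exists
        exact hWsub w hwW (by simpa [mem_compl_iff] using hwne) hwi
  have key : ∀ z ∈ Ω, z ∉ U := by
    intro z hz hzU
    have hx : (Ω ∩ U).Nonempty := ⟨z, hz, hzU⟩
    obtain ⟨w, hwΩ, hwne⟩ := hne
    have hwU : w ∉ U := fun hc => hwne hc.self_of_nhds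
    have hy : (Ω ∩ interior Uᶜ).Nonempty := ⟨w, hwΩ, (hcov hwΩ).resolve_left hwU⟩
    obtain ⟨v, hvΩ, hvU, hvV⟩ := hΩc U (interior Uᶜ) hUo isOpen_interior hcov hx hy
    exact (interior_subset hvV) hvU
  intro z hz
  rcases merom_dichotomy (hm z hz) with hl | hr
  · exact absurd hl (key z hz)
  · exact hr

/-- The set of `∞`-points of a nowhere-locally-`∞` meromorphic function is finite on
compact subsets. -/
lemma finite_infty_inter {h : ℂ → OnePoint ℂ} {Ω : Set ℂ}
    (hm : SphMeromorphicOn h Ω)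
    (hdisc : ∀ z ∈ Ω, ∀ᶠ w in nhdsWithin z {z}ᶜ, h w ≠ ∞)
    {A : Set ℂ} (hA : IsCompact A) (hAΩ : A ⊆ Ω) :
    {z | z ∈ A ∧ h z = ∞}.Finite := by
  set V : Set ℂ := {z | ∀ᶠ w in nhds z, h w ≠ ∞} with hVdef
  have hVo : IsOpen V := isOpen_setOf_eventually_nhds
  have hsub2 : A \ V ⊆ {z | z ∈ A ∧ h z = ∞} := by
    rintro z ⟨hzA, hzV⟩
    refine ⟨hzA, ?_⟩
    by_contra hne
    exact hzV (eventually_ne_infty_of_ne (hm z (hAΩ hzA)) hne)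
  have hTeq : {z | z ∈ A ∧ h z = ∞} = A \ V := by
    apply Subset.antisymm _ hsub2
    rintro z ⟨hzA, hzi⟩
    exact ⟨hzA, fun hzV => hzV.self_of_nhds hzi⟩
  rw [hTeq]
  have hcomp : IsCompact (A \ V) := hA.diff hVo
  apply hcomp.finite
  rw [isDiscrete_iff_nhdsNE]
  intro x hx
  rw [inf_principal_eq_bot]
  filter_upwards [hdisc x (hAΩ hx.1)] with w hw
  simp only [mem_compl_iff]
  intro hwT
  exact hw (hsub2 hwT).2

/-- If `gₙ` are meromorphic on `D_r(z₀)`, pole-free (holomorphic) on `D_{r/2}(z₀)`, and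
converge locally uniformly (spherical metric) on the punctured disk `D_r(z₀) \ {z₀}` to a
meromorphic function `h ≢ ∞`, then `gₙ` converges locally uniformly on the full disk
`D_{r/2}(z₀)`; consequently the family `{gₙ}` is normal at `z₀`. -/
theorem locUnif_on_disk_of_punctured_of_holomorphic
    (z₀ : ℂ) (r : ℝ) (hr : 0 < r)
    (g : ℕ → ℂ → OnePoint ℂ)
    (hmero : ∀ n, SphMeromorphicOn (g n) (ball z₀ r))
    (hpf : ∀ n, ∀ z ∈ ball z₀ (r / 2), g n z ≠ ∞)
    (h : ℂ → OnePoint ℂ)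
    (hh : SphMeromorphicOn h (ball z₀ r \ {z₀}))
    (hne : ¬ ∀ z ∈ ball z₀ r \ {z₀}, h z = ∞)
    (hconv : SphLocUnifOn g h (ball z₀ r \ {z₀})) :
    (∃ H : ℂ → OnePoint ℂ, SphLocUnifOn g H (ball z₀ (r / 2))) ∧
      SphNormalAt {f | ∃ n : ℕ, f = g n} z₀ := by
  have hr2 : (0:ℝ) < r / 2 := by linarith
  have hΩpre : IsPreconnected (ball z₀ r \ {z₀}) := isPreconnected_punctured_ball z₀ hr
  push_neg at hne
  have hdisc : ∀ z ∈ ball z₀ r \ {z₀}, ∀ᶠ w in nhdsWithin z {z}ᶜ, h w ≠ ∞ :=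
    eventually_ne_infty_punctured hΩpre hh hne
  set f : ℕ → ℂ → ℂ := fun n z => sphToC (g n z) with hfdef
  have hfan : ∀ n, ∀ z ∈ ball z₀ (r / 2), AnalyticAt ℂ (f n) z := by
    intro n z hz
    apply analyticAt_sphToC (hmero n z (ball_subset_ball (by linarith) hz))
    filter_upwards [isOpen_ball.eventually_mem hz] with w hw
    exact hpf n w hw
  have hfd : ∀ n, DifferentiableOn ℂ (f n) (ball z₀ (r / 2)) := fun n z hz =>
    ((hfan n z hz).differentiableAt).differentiableWithinAt
  have hgf : ∀ n, ∀ z ∈ ball z₀ (r / 2), g n z = ((f n z : ℂ) : OnePoint ℂ) := fun n z hz =>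
    (coe_sphToC (hpf n z hz)).symm
  -- the key uniform Cauchy estimate on closed balls, via the maximum modulus principle
  have key : ∀ ρ : ℝ, r / 4 ≤ ρ → ρ < r / 2 → ∀ ε : ℝ, 0 < ε →
      ∃ N, ∀ m ≥ N, ∀ n ≥ N, ∀ z ∈ closedBall z₀ ρ, dist (f m z) (f n z) ≤ ε := by
    intro ρ hρ1 hρ2 ε hε
    set ρ₂ := (ρ + r / 2) / 2 with hρ₂def
    have hρρ₂ : ρ < ρ₂ := by rw [hρ₂def]; linarith
    have hρ₂r : ρ₂ < r / 2 := by rw [hρ₂def]; linarith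
    have hρ0 : (0:ℝ) < ρ := lt_of_lt_of_le (by linarith) hρ1
    set A : Set ℂ := closedBall z₀ ρ₂ \ ball z₀ ρ with hAdef
    have hAc : IsCompact A := (isCompact_closedBall z₀ ρ₂).diff isOpen_ball
    have hAΩ : A ⊆ ball z₀ r \ {z₀} := by
      rintro z ⟨hz1, hz2⟩
      rw [mem_closedBall] at hz1
      rw [mem_ball, not_lt] at hz2
      refine ⟨by rw [mem_ball]; linarith, ?_⟩
      simp only [mem_singleton_iff]
      intro hzz; rw [hzz, dist_self] at hz2; linarith
    have hTfin : {z | z ∈ A ∧ h z = ∞}.Finite := finite_infty_inter hh hdisc hAc hAΩ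
    have hbadfin : ((fun z => dist z z₀) '' {z | z ∈ A ∧ h z = ∞}).Finite := hTfin.image _
    obtain ⟨ρ', hρ'⟩ : (Ioo ρ ρ₂ \ ((fun z => dist z z₀) '' {z | z ∈ A ∧ h z = ∞})).Nonempty :=
      ((Set.Ioo_infinite hρρ₂).diff hbadfin).nonempty
    obtain ⟨⟨hρ'1, hρ'2⟩, hρ'bad⟩ := hρ'
    have hρ'0 : (0:ℝ) < ρ' := lt_trans hρ0 hρ'1
    have hρ'r2 : ρ' < r / 2 := lt_trans hρ'2 hρ₂r
    set C : Set ℂ := sphere z₀ ρ' with hCdef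
    have hCball : C ⊆ ball z₀ (r / 2) := by
      intro z hz; rw [hCdef, mem_sphere] at hz; rw [mem_ball, hz]; exact hρ'r2
    have hCΩ : C ⊆ ball z₀ r \ {z₀} := by
      intro z hz; rw [hCdef, mem_sphere] at hz
      refine ⟨by rw [mem_ball, hz]; linarith, ?_⟩
      simp only [mem_singleton_iff]
      intro hzz; rw [hzz, dist_self] at hz; exact absurd hz.symm (ne_of_gt hρ'0)
    have hCfin : ∀ z ∈ C, h z ≠ ∞ := by
      intro z hz hzinf
      apply hρ'bad
      have hzd : dist z z₀ = ρ' := by rwa [hCdef, mem_sphere] at hz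
      exact ⟨z, ⟨⟨by rw [mem_closedBall, hzd]; linarith,
        by rw [mem_ball, not_lt, hzd]; linarith⟩, hzinf⟩, hzd⟩
    have hφcont : ContinuousOn (fun w => sphToC (h w)) C := fun z hz =>
      ((analyticAt_sphToC (hh z (hCΩ hz))
        (eventually_ne_infty_of_ne (hh z (hCΩ hz)) (hCfin z hz))).continuousAt).continuousWithinAt
    obtain ⟨M₀, hM₀⟩ := (isCompact_sphere z₀ ρ').exists_bound_of_continuousOn hφcont
    set M := max M₀ 0 with hMdef
    have hM0 : (0:ℝ) ≤ M := le_max_right _ _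
    have hMb : ∀ z ∈ C, ‖sphToC (h z)‖ ≤ M := fun z hz =>
      le_trans (by exact hM₀ z hz) (le_max_left _ _)
    set B := 2 * M + 2 with hBdef
    have hB0 : (0:ℝ) < B := by rw [hBdef]; linarith
    have hε₀pos : (0:ℝ) < 1 / (Real.sqrt 2 * Real.sqrt (1 + M ^ 2)) := by positivity
    set ε₁ := min (1 / (Real.sqrt 2 * Real.sqrt (1 + M ^ 2))) (ε / (1 + B ^ 2)) with hε₁def
    have hε₁pos : 0 < ε₁ := lt_min hε₀pos (by positivity)
    obtain ⟨N, hN⟩ := hconv C hCΩ (isCompact_sphere z₀ ρ') ε₁ hε₁pos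
    have hε₁left : ε₁ ≤ 1 / (Real.sqrt 2 * Real.sqrt (1 + M ^ 2)) :=
      le_trans (le_of_eq hε₁def) (min_le_left _ _)
    have hε₁right : ε₁ ≤ ε / (1 + B ^ 2) := le_trans (le_of_eq hε₁def) (min_le_right _ _)
    clear_value M B ε₁
    refine ⟨N, ?_⟩
    have hbound : ∀ k ≥ N, ∀ w ∈ C, ‖f k w‖ ≤ B ∧
        ‖f k w - sphToC (h w)‖ ≤ (1 + B ^ 2) * ε₁ / 2 := by
      intro k hk w hw
      have hsph := hN k hk w hw
      rw [hgf k w (hCball hw), ← coe_sphToC (hCfin w hw)] at hsph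
      have habs : ‖f k w‖ ≤ B := by
        by_contra hgt
        push_neg at hgt
        have hge : 2 * M + 2 ≤ ‖f k w‖ := by rw [← hBdef]; exact le_of_lt hgt
        have hlow := le_sphDist_of_big (hMb w hw) hge
        have h2 := lt_of_le_of_lt hlow hsph
        exact absurd (lt_of_lt_of_le h2 hε₁left) (lt_irrefl _)
      refine ⟨habs, ?_⟩
      have hble : ‖sphToC (h w)‖ ≤ B := le_trans (hMb w hw) (by rw [hBdef]; linarith)
      have h4 := abs_sub_le_sphDist habs hble
      have h5 : sphDist ((f k w : ℂ) : OnePoint ℂ) ((sphToC (h w) : ℂ) : OnePoint ℂ) ≤ ε₁ :=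
        le_of_lt hsph
      calc ‖f k w - sphToC (h w)‖ ≤
            (1 + B ^ 2) * sphDist ((f k w : ℂ) : OnePoint ℂ) ((sphToC (h w) : ℂ) : OnePoint ℂ) / 2 := h4
        _ ≤ (1 + B ^ 2) * ε₁ / 2 := by
            have : (1 + B ^ 2) * sphDist ((f k w : ℂ) : OnePoint ℂ)
                ((sphToC (h w) : ℂ) : OnePoint ℂ) ≤ (1 + B ^ 2) * ε₁ :=
              mul_le_mul_of_nonneg_left h5 (by positivity)
            linarith
    have hcirc : ∀ {m n : ℕ}, N ≤ m → N ≤ n → ∀ w ∈ C, ‖f m w - f n w‖ ≤ ε := by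
      intro m n hm hn w hw
      obtain ⟨hm1, hm2⟩ := hbound m hm w hw
      obtain ⟨hn1, hn2⟩ := hbound n hn w hw
      have htri : ‖f m w - f n w‖ ≤
          ‖f m w - sphToC (h w)‖ + ‖f n w - sphToC (h w)‖ := by
        have := norm_sub_le_norm_sub_add_norm_sub (f m w) (sphToC (h w)) (f n w)
        rwa [norm_sub_rev (sphToC (h w)) (f n w)] at this
      have hfin : (1 + B ^ 2) * ε₁ ≤ ε := by
        have hle := hε₁right
        rw [le_div_iff₀ (by positivity : (0:ℝ) < 1 + B ^ 2)] at hle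
        nlinarith
      nlinarith [hm2, hn2, htri, hfin]
    intro m hm n hn z hzρ
    have hdiffmn : DifferentiableOn ℂ (fun w => f m w - f n w) (closedBall z₀ ρ') :=
      DifferentiableOn.sub ((hfd m).mono (closedBall_subset_ball hρ'r2))
        ((hfd n).mono (closedBall_subset_ball hρ'r2))
    have hmax : ∀ w ∈ closedBall z₀ ρ', ‖f m w - f n w‖ ≤ ε := by
      intro w hw
      apply Complex.norm_le_of_forall_mem_frontier_norm_le (f := fun w => f m w - f n w)
        (U := ball z₀ ρ') isBounded_ball
      · apply DifferentiableOn.diffContOnCl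
        rw [closure_ball z₀ (ne_of_gt hρ'0)]
        exact hdiffmn
      · intro x hx
        rw [frontier_ball z₀ (ne_of_gt hρ'0)] at hx
        exact hcirc hm hn x hx
      · rw [closure_ball z₀ (ne_of_gt hρ'0)]; exact hw
    have hzρ' : z ∈ closedBall z₀ ρ' := closedBall_subset_closedBall (le_of_lt hρ'1) hzρ
    rw [dist_eq_norm]
    exact hmax z hzρ'
  -- pointwise Cauchy, limit function
  have hmemρ : ∀ z ∈ ball z₀ (r / 2), r / 4 ≤ max (r / 4) (dist z z₀) ∧
      max (r / 4) (dist z z₀) < r / 2 ∧ z ∈ closedBall z₀ (max (r / 4) (dist z z₀)) := by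
    intro z hz
    rw [mem_ball] at hz
    exact ⟨le_max_left _ _, max_lt (by linarith) hz, by rw [mem_closedBall]; exact le_max_right _ _⟩
  have hcauchy : ∀ z ∈ ball z₀ (r / 2), CauchySeq (fun n => f n z) := by
    intro z hz
    obtain ⟨ha, hb, hc⟩ := hmemρ z hz
    rw [Metric.cauchySeq_iff]
    intro ε hε
    obtain ⟨N, hN⟩ := key _ ha hb (ε / 2) (by linarith)
    exact ⟨N, fun m hm n hn => lt_of_le_of_lt (hN m hm n hn z hc) (by linarith)⟩
  set F : ℂ → ℂ := fun z => limUnder atTop (fun n => f n z) with hFdef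
  have hFtend : ∀ z ∈ ball z₀ (r / 2), Tendsto (fun n => f n z) atTop (nhds (F z)) :=
    fun z hz => (hcauchy z hz).tendsto_limUnder
  have unif : ∀ ρ : ℝ, r / 4 ≤ ρ → ρ < r / 2 → ∀ ε : ℝ, 0 < ε →
      ∃ N, ∀ n ≥ N, ∀ z ∈ closedBall z₀ ρ, dist (f n z) (F z) ≤ ε := by
    intro ρ hρ1 hρ2 ε hε
    obtain ⟨N, hN⟩ := key ρ hρ1 hρ2 ε hε
    refine ⟨N, fun n hn z hz => ?_⟩
    have hzb : z ∈ ball z₀ (r / 2) :=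
      lt_of_le_of_lt (mem_closedBall.1 hz) hρ2
    have hlim : Tendsto (fun m => dist (f n z) (f m z)) atTop (nhds (dist (f n z) (F z))) :=
      tendsto_const_nhds.dist (hFtend z hzb)
    apply le_of_tendsto hlim
    filter_upwards [eventually_ge_atTop N] with m hm
    exact hN n hn m hm z hz
  have hKρ : ∀ K : Set ℂ, K ⊆ ball z₀ (r / 2) → IsCompact K →
      ∃ ρ : ℝ, r / 4 ≤ ρ ∧ ρ < r / 2 ∧ K ⊆ closedBall z₀ ρ := by
    intro K hK hKc
    rcases K.eq_empty_or_nonempty with hKe | hKne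
    · exact ⟨r / 4, le_refl _, by linarith, by rw [hKe]; exact empty_subset _⟩
    · obtain ⟨x, hxK, hxmax⟩ := hKc.exists_isMaxOn hKne
        ((continuous_id.dist continuous_const).continuousOn)
      refine ⟨max (r / 4) (dist x z₀), le_max_left _ _,
        max_lt (by linarith) (mem_ball.1 (hK hxK)), ?_⟩
      intro z hz
      rw [mem_closedBall]
      exact le_trans (hxmax hz) (le_max_right _ _)
  set H : ℂ → OnePoint ℂ := fun z => ((F z : ℂ) : OnePoint ℂ) with hHdef
  have hHconv : SphLocUnifOn g H (ball z₀ (r / 2)) := by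
    intro K hK hKc ε hε
    obtain ⟨ρ, hρ1, hρ2, hKρ'⟩ := hKρ K hK hKc
    obtain ⟨N, hN⟩ := unif ρ hρ1 hρ2 (ε / 4) (by linarith)
    refine ⟨N, fun n hn z hz => ?_⟩
    rw [hgf n z (hK hz), hHdef]
    calc sphDist ((f n z : ℂ) : OnePoint ℂ) ((F z : ℂ) : OnePoint ℂ) ≤
          2 * ‖f n z - F z‖ := sphDist_le _ _
      _ = 2 * dist (f n z) (F z) := by rw [Complex.dist_eq]
      _ ≤ 2 * (ε / 4) := by
          have := hN n hn z (hKρ' hz)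
          linarith
      _ < ε := by linarith
  have hFdiff : DifferentiableOn ℂ F (ball z₀ (r / 2)) := by
    have htlu : TendstoLocallyUniformlyOn f F atTop (ball z₀ (r / 2)) := by
      rw [tendstoLocallyUniformlyOn_iff_forall_isCompact isOpen_ball]
      intro K hK hKc
      rw [Metric.tendstoUniformlyOn_iff]
      intro ε hε
      obtain ⟨ρ, hρ1, hρ2, hKρ'⟩ := hKρ K hK hKc
      obtain ⟨N, hN⟩ := unif ρ hρ1 hρ2 (ε / 2) (by linarith)
      filter_upwards [eventually_ge_atTop N] with n hn z hz
      rw [dist_comm]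
      exact lt_of_le_of_lt (hN n hn z (hKρ' hz)) (by linarith)
    exact htlu.differentiableOn (Eventually.of_forall hfd) isOpen_ball
  have hHmero : SphMeromorphicOn H (ball z₀ (r / 2)) := by
    intro z hz
    left
    exact ⟨F, hFdiff.analyticAt (isOpen_ball.mem_nhds hz), Eventually.of_forall fun w => rfl⟩
  refine ⟨⟨H, hHconv⟩, ball z₀ (r / 2), isOpen_ball, mem_ball_self hr2, ?_⟩
  intro F' hF'
  choose m hm using hF'
  by_cases hb : ∃ k, {n | m n = k}.Infinite
  · obtain ⟨k, hk⟩ := hb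
    have hfreq : ∃ᶠ n in atTop, m n = k := Nat.frequently_atTop_iff_infinite.2 hk
    obtain ⟨φ, hφmono, hφ⟩ := extraction_of_frequently_atTop hfreq
    refine ⟨φ, hφmono, g k, Or.inl fun z hz => hmero k z (ball_subset_ball (by linarith) hz), ?_⟩
    intro K hK hKc ε hε
    refine ⟨0, fun n _ z hz => ?_⟩
    show sphDist (F' (φ n) z) (g k z) < ε
    rw [hm (φ n), hφ n, sphDist_self]
    exact hε
  · push_neg at hb
    have hmtend : Tendsto m atTop atTop := by
      rw [Filter.tendsto_atTop]
      intro b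
      rw [← Nat.cofinite_eq_atTop, eventually_cofinite]
      apply Set.Finite.subset
        (Set.Finite.biUnion (Set.finite_Iio b) (fun k _ => hb k))
      intro n hn
      simp only [mem_setOf_eq, not_le] at hn
      exact mem_biUnion hn rfl
    refine ⟨id, strictMono_id, H, Or.inl hHmero, ?_⟩
    intro K hK hKc ε hε
    obtain ⟨N, hN⟩ := hHconv K hK hKc ε hε
    obtain ⟨N₂, hN₂⟩ := eventually_atTop.1 (hmtend.eventually (eventually_ge_atTop N))
    refine ⟨N₂, fun n hn z hz => ?_⟩
    show sphDist (F' n z) (H z) < ε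
    rw [hm n]
    exact hN (m n) (hN₂ n hn) z hz
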